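/- Let (W_i)_{i≥1} be i.i.d. with law F₀ and let ψ : 𝒲×𝒲 → ℝᵏ be a measurable symmetric kernel with E[ψ(W₁,W₂)] = 0 and E[|ψ(W₁,W₂)|²] < ∞, written as ψ = g + φ for measurable symmetric kernels g and φ. For each n, let (ĝ_{ij})_{i≠j≤n} and (φ̂_{ij})_{i≠j≤n} be arrays of ℝᵏ-valued random variables, and set ψ̂_{ij} = ĝ_{ij} + φ̂_{ij}, ĝ_{−i} = (n−1)⁻¹Σ_{j≠i}ĝ_{ij}, g_{−i} = (n−1)⁻¹Σ_{j≠i}g(W_i,W_j), and analogously φ̂_{−i}, φ_{−i}. If n⁻¹Σ_{i=1}^n |ĝ_{−i} − g_{−i}|² →p 0 and n⁻¹Σ_{i=1}^n |φ̂_{−i} − φ_{−i}|² →p 0, then Σ̂_n = (4/(n(n−1)²)) Σ_{i=1}^n (Σ_{j≠i} ψ̂_{ij})(Σ_{j≠i} ψ̂_{ij})ᵀ →p Σ = 4·Var(E[ψ(W₁,W₂) | W₁]). -/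

import Mathlib

/-!
STATEMENT 7: Consistency of the U-statistic variance estimator. (W_i) i.i.d. ~ F₀,
ψ = g + φ a measurable symmetric ℝᵏ-valued kernel with E[ψ] = 0 and E[|ψ|²] < ∞.
Given arrays ĝ_{ij}, φ̂_{ij} with ψ̂_{ij} = ĝ_{ij} + φ̂_{ij}, if the leave-one-out
averages satisfy n⁻¹Σ_i|ĝ_{−i} − g_{−i}|² →p 0 and n⁻¹Σ_i|φ̂_{−i} − φ_{−i}|² →p 0,
then Σ̂_n = (4/(n(n−1)²)) Σ_i (Σ_{j≠i} ψ̂_{ij})(Σ_{j≠i} ψ̂_{ij})ᵀ →p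
Σ = 4·Var(E[ψ(W₁,W₂)|W₁]) entrywise. ℝᵏ is `EuclideanSpace ℝ (Fin k)`; observations
are indexed by `Finset.range n` and E[ψ|W₁] by w ↦ ∫ ψ(w,w') F₀(dw').
-/

open MeasureTheory ProbabilityTheory Filter
open Topology

lemma abs_coord_le_norm {k : ℕ} (x : EuclideanSpace ℝ (Fin k)) (a : Fin k) : |x a| ≤ ‖x‖ := by
  rw [EuclideanSpace.norm_eq, ← Real.sqrt_sq_eq_abs]
  apply Real.sqrt_le_sqrt
  have := Finset.single_le_sum (f := fun i => ‖x i‖ ^ 2) (fun i _ => sq_nonneg _)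
    (Finset.mem_univ a)
  simpa [Real.norm_eq_abs, sq_abs] using this

lemma sq_integral_le {α : Type*} [MeasurableSpace α] (μ : Measure α) [IsProbabilityMeasure μ]
    (f : α → ℝ) (hf : Integrable f μ) (hf2 : Integrable (fun x => f x ^ 2) μ) :
    (∫ x, f x ∂μ) ^ 2 ≤ ∫ x, f x ^ 2 ∂μ := by
  set m := ∫ x, f x ∂μ with hm
  have h0 : 0 ≤ ∫ x, (f x ^ 2 - 2 * m * f x + m ^ 2) ∂μ := by
    rw [show (fun x => f x ^ 2 - 2 * m * f x + m ^ 2) = fun x => (f x - m) ^ 2 by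
      funext x; ring]
    exact integral_nonneg fun x => sq_nonneg _
  have i1 : Integrable (fun x => f x ^ 2 - 2 * m * f x) μ := hf2.sub (hf.const_mul (2 * m))
  have e1 : ∫ x, (f x ^ 2 - 2 * m * f x + m ^ 2) ∂μ
      = (∫ x, f x ^ 2 ∂μ) - 2 * m * m + m ^ 2 := by
    rw [integral_add i1 (integrable_const _),
      integral_sub hf2 (hf.const_mul (2 * m)), MeasureTheory.integral_const_mul, integral_const]
    simp [measure_univ]
    exact Or.inl hm.symm
  rw [e1] at h0
  nlinarith [h0]

lemma slln_aux {Ω 𝒲 : Type*} [MeasurableSpace Ω] [MeasurableSpace 𝒲]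
    (P : Measure Ω) [IsProbabilityMeasure P] (F₀ : Measure 𝒲)
    (W : ℕ → Ω → 𝒲) (hWmeas : ∀ i, Measurable (W i))
    (hiid : iIndepFun W P) (hlaw : ∀ i, P.map (W i) = F₀)
    (f : 𝒲 → ℝ) (hf : Measurable f) (hfi : Integrable f F₀) :
    ∀ ε : ℝ, 0 < ε → Tendsto
      (fun n : ℕ => P {ω | ε ≤ |((n:ℝ)⁻¹ * ∑ i ∈ Finset.range n, f (W i ω)) - ∫ w, f w ∂F₀|})
      atTop (𝓝 (0:ENNReal)) := by
  have hint : Integrable (fun ω => f (W 0 ω)) P := by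
    have h := (integrable_map_measure (μ := P) (f := W 0)
      hf.aestronglyMeasurable (hWmeas 0).aemeasurable).mp
    rw [hlaw 0] at h
    exact h hfi
  have hindep : Pairwise (Function.onFun (IndepFun · · P) fun i ω => f (W i ω)) := by
    intro i j hij
    exact (hiid.indepFun hij).comp hf hf
  have hident : ∀ i, IdentDistrib (fun ω => f (W i ω)) (fun ω => f (W 0 ω)) P P := by
    intro i
    have hW : IdentDistrib (W i) (W 0) P P :=
      ⟨(hWmeas i).aemeasurable, (hWmeas 0).aemeasurable, by rw [hlaw i, hlaw 0]⟩
    exact hW.comp hf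
  have hexp : ∫ ω, f (W 0 ω) ∂P = ∫ w, f w ∂F₀ := by
    rw [← hlaw 0, integral_map (hWmeas 0).aemeasurable hf.aestronglyMeasurable]
  have hae := strong_law_ae_real (fun i ω => f (W i ω)) hint hindep hident
  have hmeas : ∀ n : ℕ, AEStronglyMeasurable
      (fun ω => (n:ℝ)⁻¹ * ∑ i ∈ Finset.range n, f (W i ω)) P := by
    intro n
    exact (((Finset.range n).measurable_sum
      (fun i _ => hf.comp (hWmeas i))).const_mul _).aestronglyMeasurable
  have htm : TendstoInMeasure P (fun (n : ℕ) ω => (n:ℝ)⁻¹ * ∑ i ∈ Finset.range n, f (W i ω))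
      atTop (fun _ => ∫ w, f w ∂F₀) := by
    refine tendstoInMeasure_of_tendsto_ae hmeas ?_
    filter_upwards [hae] with ω hω
    rw [hexp] at hω
    convert hω using 2 with n
    rw [div_eq_inv_mul]
  intro ε hε
  have := tendstoInMeasure_iff_dist.mp htm ε hε
  simpa only [Real.dist_eq] using this

lemma combine {Ω : Type*} [MeasurableSpace Ω] (P : Measure Ω)
    (X S Hn A B R : ℕ → Ω → ℝ) (c Hv : ℝ) (hHv : 0 ≤ Hv)
    (hS : ∀ ε : ℝ, 0 < ε → Tendsto (fun n : ℕ => P {ω | ε ≤ |S n ω - c|}) atTop (𝓝 0))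
    (hH : ∀ ε : ℝ, 0 < ε → Tendsto (fun n : ℕ => P {ω | ε ≤ |Hn n ω - Hv|}) atTop (𝓝 0))
    (hA : ∀ ε : ℝ, 0 < ε → Tendsto (fun n : ℕ => P {ω | ε ≤ |A n ω|}) atTop (𝓝 0))
    (hB : ∀ ε : ℝ, 0 < ε → Tendsto (fun n : ℕ => P {ω | ε ≤ |B n ω|}) atTop (𝓝 0))
    (hR : ∀ ε : ℝ, 0 < ε → Tendsto (fun n : ℕ => P {ω | ε ≤ |R n ω|}) atTop (𝓝 0))
    (hbound : ∀ θ : ℝ, 0 < θ → ∀ᶠ n in atTop, ∀ ω,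
      |X n ω - 4 * c| ≤ 4 * θ * Hn n ω + 12 * (θ⁻¹ + 1) * (A n ω + B n ω + R n ω)
        + 4 * |S n ω - c|) :
    TendstoInMeasure P X atTop (fun _ => 4 * c) := by
  refine tendstoInMeasure_iff_dist.mpr ?_
  intro ε hε
  set M : ℝ := Hv + 1 with hM
  have hM0 : 0 < M := by linarith
  set θ : ℝ := ε / (32 * M) with hθdef
  have hθ : 0 < θ := by positivity
  have hθ1 : 0 < θ⁻¹ + 1 := by positivity
  set d₀ : ℝ := ε / (72 * (θ⁻¹ + 1)) with hd₀def
  have hd₀ : 0 < d₀ := by positivity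
  set s₀ : ℝ := ε / 16 with hs₀def
  have hs₀ : 0 < s₀ := by positivity
  have hsub : ∀ᶠ n in atTop, P {ω | ε ≤ dist (X n ω) (4 * c)} ≤
      P {ω | s₀ ≤ |S n ω - c|} + P {ω | 1 ≤ |Hn n ω - Hv|} + P {ω | d₀ ≤ |A n ω|}
        + P {ω | d₀ ≤ |B n ω|} + P {ω | d₀ ≤ |R n ω|} := by
    filter_upwards [hbound θ hθ] with n hn
    have hincl : {ω | ε ≤ dist (X n ω) (4 * c)} ⊆
        ({ω | s₀ ≤ |S n ω - c|} ∪ {ω | 1 ≤ |Hn n ω - Hv|} ∪ {ω | d₀ ≤ |A n ω|}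
          ∪ {ω | d₀ ≤ |B n ω|} ∪ {ω | d₀ ≤ |R n ω|}) := by
      intro ω hω
      simp only [Set.mem_setOf_eq, Real.dist_eq] at hω
      by_contra hc
      simp only [Set.mem_union, Set.mem_setOf_eq, not_or, not_le] at hc
      obtain ⟨⟨⟨⟨h1, h2⟩, h3⟩, h4⟩, h5⟩ := hc
      have hb := hn ω
      have hHnle : Hn n ω ≤ M := by
        have := abs_lt.mp h2
        rw [hM]; linarith [this.2]
      have hAle : A n ω ≤ d₀ := (le_abs_self _).trans h3.le
      have hBle : B n ω ≤ d₀ := (le_abs_self _).trans h4.le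
      have hRle : R n ω ≤ d₀ := (le_abs_self _).trans h5.le
      have e1 : 4 * θ * Hn n ω ≤ 4 * θ * M :=
        mul_le_mul_of_nonneg_left hHnle (by positivity)
      have e2 : 12 * (θ⁻¹ + 1) * (A n ω + B n ω + R n ω) ≤ 12 * (θ⁻¹ + 1) * (3 * d₀) :=
        mul_le_mul_of_nonneg_left (by linarith) (by positivity)
      have e3 : 4 * θ * M = ε / 8 := by
        rw [hθdef]; field_simp; ring
      have e4 : 12 * (θ⁻¹ + 1) * (3 * d₀) = ε / 2 := by
        rw [hd₀def]; field_simp; ring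
      have e5 : 4 * |S n ω - c| < 4 * s₀ := by linarith
      rw [hs₀def] at e5
      rw [e3] at e1; rw [e4] at e2
      linarith
    refine (measure_mono hincl).trans ?_
    refine (measure_union_le _ _).trans ?_
    refine add_le_add_left ?_ _
    refine (measure_union_le _ _).trans ?_
    refine add_le_add_left ?_ _
    refine (measure_union_le _ _).trans ?_
    refine add_le_add_left ?_ _
    exact measure_union_le _ _
  have hupper : Tendsto (fun n : ℕ =>
      P {ω | s₀ ≤ |S n ω - c|} + P {ω | 1 ≤ |Hn n ω - Hv|} + P {ω | d₀ ≤ |A n ω|}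
        + P {ω | d₀ ≤ |B n ω|} + P {ω | d₀ ≤ |R n ω|}) atTop (𝓝 0) := by
    have := ((((hS s₀ hs₀).add (hH 1 one_pos)).add (hA d₀ hd₀)).add (hB d₀ hd₀)).add
      (hR d₀ hd₀)
    simpa using this
  exact tendsto_of_tendsto_of_tendsto_of_le_of_le' tendsto_const_nhds hupper
    (Eventually.of_forall fun n => zero_le) hsub

lemma helper_prod (θ xa xb da db X D : ℝ) (hθ : 0 < θ) (hxa : |xa| ≤ X) (hxb : |xb| ≤ X)
    (hda : |da| ≤ D) (hdb : |db| ≤ D) :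
    |(xa + da) * (xb + db) - xa * xb| ≤ θ * X ^ 2 + (θ⁻¹ + 1) * D ^ 2 := by
  have hX : 0 ≤ X := (abs_nonneg _).trans hxa
  have hD : 0 ≤ D := (abs_nonneg _).trans hda
  have h1 : |(xa + da) * (xb + db) - xa * xb| ≤ |xa| * |db| + |da| * |xb| + |da| * |db| := by
    have e : (xa + da) * (xb + db) - xa * xb = xa * db + da * xb + da * db := by ring
    rw [e]
    calc |xa * db + da * xb + da * db| ≤ |xa * db + da * xb| + |da * db| := abs_add_le _ _
      _ ≤ |xa * db| + |da * xb| + |da * db| := by linarith [abs_add_le (xa * db) (da * xb)]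
      _ = |xa| * |db| + |da| * |xb| + |da| * |db| := by rw [abs_mul, abs_mul, abs_mul]
  have h2 : |xa| * |db| ≤ X * D := mul_le_mul hxa hdb (abs_nonneg _) hX
  have h3 : |da| * |xb| ≤ D * X := mul_le_mul hda hxb (abs_nonneg _) hD
  have h4 : |da| * |db| ≤ D * D := mul_le_mul hda hdb (abs_nonneg _) hD
  have hθi : 0 < θ⁻¹ := inv_pos.mpr hθ
  have amgm : 2 * (X * D) ≤ θ * X ^ 2 + θ⁻¹ * D ^ 2 := by
    have key : θ * X ^ 2 + θ⁻¹ * D ^ 2 - 2 * (X * D) = θ⁻¹ * (θ * X - D) ^ 2 := by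
      field_simp; ring
    nlinarith [mul_nonneg hθi.le (sq_nonneg (θ * X - D))]
  nlinarith

set_option maxHeartbeats 1000000 in
lemma pointwise_bound {k : ℕ} (n : ℕ) (hn : 2 ≤ n) (θ : ℝ) (hθ : 0 < θ) (a b : Fin k)
    (Sg Sp Tg Tp u : ℕ → EuclideanSpace ℝ (Fin k)) :
    |(4 / ((n : ℝ) * ((n : ℝ) - 1) ^ 2)) *
        ∑ i ∈ Finset.range n, ((Sg i + Sp i) a) * ((Sg i + Sp i) b)
      - 4 * ((n : ℝ)⁻¹ * ∑ i ∈ Finset.range n, u i a * u i b)|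
    ≤ 4 * θ * ((n : ℝ)⁻¹ * ∑ i ∈ Finset.range n, ‖u i‖ ^ 2)
      + 12 * (θ⁻¹ + 1) *
        (((n : ℝ)⁻¹ * ∑ i ∈ Finset.range n,
            ‖(((n : ℝ) - 1)⁻¹ • Sg i) - (((n : ℝ) - 1)⁻¹ • Tg i)‖ ^ 2)
          + ((n : ℝ)⁻¹ * ∑ i ∈ Finset.range n,
            ‖(((n : ℝ) - 1)⁻¹ • Sp i) - (((n : ℝ) - 1)⁻¹ • Tp i)‖ ^ 2)
          + ((n : ℝ)⁻¹ * ∑ i ∈ Finset.range n,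
            ‖(((n : ℝ) - 1)⁻¹ • (Tg i + Tp i)) - u i‖ ^ 2)) := by
  have hn1 : (1 : ℝ) ≤ (n : ℝ) := by exact_mod_cast Nat.one_le_of_lt hn
  have hn2 : (2 : ℝ) ≤ (n : ℝ) := by exact_mod_cast hn
  have hm : ((n : ℝ) - 1) ≠ 0 := by linarith
  have hn0 : (n : ℝ) ≠ 0 := by linarith
  have hninv : (0 : ℝ) ≤ (n : ℝ)⁻¹ := by positivity
  set m : ℝ := (n : ℝ) - 1 with hmdef
  set p : ℕ → EuclideanSpace ℝ (Fin k) := fun i => m⁻¹ • (Sg i + Sp i) with hpdef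
  set δ : ℕ → EuclideanSpace ℝ (Fin k) := fun i => p i - u i with hδdef
  set Δg : ℕ → EuclideanSpace ℝ (Fin k) := fun i => m⁻¹ • Sg i - m⁻¹ • Tg i with hΔg
  set Δp : ℕ → EuclideanSpace ℝ (Fin k) := fun i => m⁻¹ • Sp i - m⁻¹ • Tp i with hΔp
  set e : ℕ → EuclideanSpace ℝ (Fin k) := fun i => m⁻¹ • (Tg i + Tp i) - u i with hedef
  have hδsplit : ∀ i, δ i = Δg i + Δp i + e i := by
    intro i
    simp only [hδdef, hpdef, hΔg, hΔp, hedef, smul_add]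
    abel
  -- step 1 : rewrite the first term
  have step1 : (4 / ((n : ℝ) * m ^ 2)) *
      ∑ i ∈ Finset.range n, ((Sg i + Sp i) a) * ((Sg i + Sp i) b)
      = 4 * ((n : ℝ)⁻¹ * ∑ i ∈ Finset.range n, p i a * p i b) := by
    have e1 : ∑ i ∈ Finset.range n, ((Sg i + Sp i) a) * ((Sg i + Sp i) b)
        = m ^ 2 * ∑ i ∈ Finset.range n, p i a * p i b := by
      rw [Finset.mul_sum]
      refine Finset.sum_congr rfl fun i _ => ?_
      have hpa : p i a = m⁻¹ * ((Sg i + Sp i) a) := rfl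
      have hpb : p i b = m⁻¹ * ((Sg i + Sp i) b) := rfl
      rw [hpa, hpb]
      field_simp
    rw [e1]
    field_simp
  rw [step1]
  -- step 2: per-i bound
  have key : ∀ i, |p i a * p i b - u i a * u i b|
      ≤ θ * ‖u i‖ ^ 2 + (θ⁻¹ + 1) * ‖δ i‖ ^ 2 := by
    intro i
    have hda : |δ i a| ≤ ‖δ i‖ := abs_coord_le_norm _ _
    have hdb : |δ i b| ≤ ‖δ i‖ := abs_coord_le_norm _ _
    have hxa : |u i a| ≤ ‖u i‖ := abs_coord_le_norm _ _
    have hxb : |u i b| ≤ ‖u i‖ := abs_coord_le_norm _ _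
    have hpa : p i a = u i a + δ i a := by
      simp only [hδdef, PiLp.sub_apply]; ring
    have hpb : p i b = u i b + δ i b := by
      simp only [hδdef, PiLp.sub_apply]; ring
    rw [hpa, hpb]
    exact helper_prod θ _ _ _ _ _ _ hθ hxa hxb hda hdb
  -- three-term bound for δ
  have hδ3 : ∀ i, ‖δ i‖ ^ 2 ≤ 3 * (‖Δg i‖ ^ 2 + ‖Δp i‖ ^ 2 + ‖e i‖ ^ 2) := by
    intro i
    have htri : ‖δ i‖ ≤ ‖Δg i‖ + ‖Δp i‖ + ‖e i‖ := by
      rw [hδsplit i]; exact norm_add₃_le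
    nlinarith [norm_nonneg (δ i), norm_nonneg (Δg i), norm_nonneg (Δp i), norm_nonneg (e i),
      sq_nonneg (‖Δg i‖ - ‖Δp i‖), sq_nonneg (‖Δg i‖ - ‖e i‖), sq_nonneg (‖Δp i‖ - ‖e i‖)]
  -- combine the sums
  have habs : |4 * ((n : ℝ)⁻¹ * ∑ i ∈ Finset.range n, p i a * p i b)
      - 4 * ((n : ℝ)⁻¹ * ∑ i ∈ Finset.range n, u i a * u i b)|
      ≤ 4 * ((n : ℝ)⁻¹ * ∑ i ∈ Finset.range n,
          (θ * ‖u i‖ ^ 2 + (θ⁻¹ + 1) * ‖δ i‖ ^ 2)) := by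
    have e1 : 4 * ((n : ℝ)⁻¹ * ∑ i ∈ Finset.range n, p i a * p i b)
        - 4 * ((n : ℝ)⁻¹ * ∑ i ∈ Finset.range n, u i a * u i b)
        = 4 * ((n : ℝ)⁻¹ * ∑ i ∈ Finset.range n, (p i a * p i b - u i a * u i b)) := by
      rw [Finset.sum_sub_distrib]; ring
    rw [e1, abs_mul, abs_mul]
    rw [abs_of_nonneg (show (0:ℝ) ≤ 4 by norm_num), abs_of_nonneg hninv]
    have e2 : |∑ i ∈ Finset.range n, (p i a * p i b - u i a * u i b)|
        ≤ ∑ i ∈ Finset.range n, (θ * ‖u i‖ ^ 2 + (θ⁻¹ + 1) * ‖δ i‖ ^ 2) :=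
      (Finset.abs_sum_le_sum_abs _ _).trans (Finset.sum_le_sum fun i _ => key i)
    have := mul_le_mul_of_nonneg_left e2 hninv
    nlinarith
  refine habs.trans ?_
  -- distribute and bound
  have hsum : ∑ i ∈ Finset.range n, (θ * ‖u i‖ ^ 2 + (θ⁻¹ + 1) * ‖δ i‖ ^ 2)
      = θ * ∑ i ∈ Finset.range n, ‖u i‖ ^ 2
        + (θ⁻¹ + 1) * ∑ i ∈ Finset.range n, ‖δ i‖ ^ 2 := by
    rw [Finset.sum_add_distrib, ← Finset.mul_sum, ← Finset.mul_sum]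
  rw [hsum]
  have hθ1 : (0:ℝ) < θ⁻¹ + 1 := by positivity
  have hδsum : ∑ i ∈ Finset.range n, ‖δ i‖ ^ 2
      ≤ 3 * (∑ i ∈ Finset.range n, ‖Δg i‖ ^ 2 + ∑ i ∈ Finset.range n, ‖Δp i‖ ^ 2
        + ∑ i ∈ Finset.range n, ‖e i‖ ^ 2) := by
    have := Finset.sum_le_sum (fun i (_ : i ∈ Finset.range n) => hδ3 i)
    calc ∑ i ∈ Finset.range n, ‖δ i‖ ^ 2
        ≤ ∑ i ∈ Finset.range n, 3 * (‖Δg i‖ ^ 2 + ‖Δp i‖ ^ 2 + ‖e i‖ ^ 2) := this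
      _ = 3 * (∑ i ∈ Finset.range n, ‖Δg i‖ ^ 2 + ∑ i ∈ Finset.range n, ‖Δp i‖ ^ 2
          + ∑ i ∈ Finset.range n, ‖e i‖ ^ 2) := by
          rw [← Finset.mul_sum, Finset.sum_add_distrib, Finset.sum_add_distrib]
  have husum : (0:ℝ) ≤ ∑ i ∈ Finset.range n, ‖u i‖ ^ 2 :=
    Finset.sum_nonneg fun i _ => sq_nonneg _
  -- final arithmetic
  have hmono := mul_le_mul_of_nonneg_left (mul_le_mul_of_nonneg_left hδsum hninv) hθ1.le
  nlinarith [hmono]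

set_option maxHeartbeats 1600000 in
lemma Rconv {Ω 𝒲 : Type*} [MeasurableSpace Ω] [MeasurableSpace 𝒲] {k : ℕ}
    (P : Measure Ω) [IsProbabilityMeasure P] (F₀ : Measure 𝒲) [IsProbabilityMeasure F₀]
    (W : ℕ → Ω → 𝒲) (hWmeas : ∀ i, Measurable (W i))
    (hiid : iIndepFun W P) (hlaw : ∀ i, P.map (W i) = F₀)
    (ψ : 𝒲 → 𝒲 → EuclideanSpace ℝ (Fin k))
    (hψm : Measurable (Function.uncurry ψ))
    (hψInt : Integrable (fun q : 𝒲 × 𝒲 => ψ q.1 q.2) (F₀.prod F₀))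
    (hhsq : Integrable (fun w => ‖∫ w', ψ w w' ∂F₀‖ ^ 2) F₀)
    (hψsq : Integrable (fun q : 𝒲 × 𝒲 => ‖ψ q.1 q.2‖ ^ 2) (F₀.prod F₀)) :
    ∀ ε : ℝ, 0 < ε → Tendsto (fun n : ℕ => P {ω | ε ≤
      |(n:ℝ)⁻¹ * ∑ i ∈ Finset.range n,
        ‖(((n:ℝ) - 1)⁻¹ • ∑ j ∈ (Finset.range n).erase i, ψ (W i ω) (W j ω))
          - (∫ w', ψ (W i ω) w' ∂F₀)‖ ^ 2|}) atTop (𝓝 0) := by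
  classical
  set h : 𝒲 → EuclideanSpace ℝ (Fin k) := fun w => ∫ w', ψ w w' ∂F₀ with hhdef
  have hψsm : StronglyMeasurable (Function.uncurry ψ) := hψm.stronglyMeasurable
  have hhsm : StronglyMeasurable h := hψsm.integral_prod_right'
  have hhm : Measurable h := hhsm.measurable
  set ξ : 𝒲 × 𝒲 → EuclideanSpace ℝ (Fin k) := fun q => ψ q.1 q.2 - h q.1 with hξdef
  have hξm : Measurable ξ := by
    have : Measurable (fun q : 𝒲 × 𝒲 => ψ q.1 q.2) := hψm
    exact this.sub (hhm.comp measurable_fst)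
  -- measure preserving projections
  have mpfst : MeasurePreserving (Prod.fst : 𝒲 × 𝒲 → 𝒲) (F₀.prod F₀) F₀ :=
    ⟨measurable_fst, by simp⟩
  have mpsnd : MeasurePreserving (Prod.snd : 𝒲 × 𝒲 → 𝒲) (F₀.prod F₀) F₀ :=
    ⟨measurable_snd, by simp⟩
  have hhfst : Integrable (fun q : 𝒲 × 𝒲 => ‖h q.1‖ ^ 2) (F₀.prod F₀) :=
    (mpfst.integrable_comp (hhm.norm.pow_const 2).aestronglyMeasurable).mpr hhsq
  have hbnd : Integrable (fun q : 𝒲 × 𝒲 => 2 * ‖ψ q.1 q.2‖ ^ 2 + 2 * ‖h q.1‖ ^ 2)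
      (F₀.prod F₀) := (hψsq.const_mul 2).add (hhfst.const_mul 2)
  have hξsq : Integrable (fun q : 𝒲 × 𝒲 => ‖ξ q‖ ^ 2) (F₀.prod F₀) := by
    refine Integrable.mono' hbnd
      ((hξm.norm.pow_const 2).aestronglyMeasurable) (Eventually.of_forall fun q => ?_)
    have h1 : ‖ξ q‖ ≤ ‖ψ q.1 q.2‖ + ‖h q.1‖ := norm_sub_le _ _
    have h2 : ‖(‖ξ q‖ ^ 2 : ℝ)‖ = ‖ξ q‖ ^ 2 := by
      rw [Real.norm_eq_abs, abs_of_nonneg (sq_nonneg _)]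
    rw [h2]
    nlinarith [norm_nonneg (ξ q), norm_nonneg (ψ q.1 q.2), norm_nonneg (h q.1),
      sq_nonneg (‖ψ q.1 q.2‖ - ‖h q.1‖)]
  set V : ℝ := ∫ q, ‖ξ q‖ ^ 2 ∂(F₀.prod F₀) with hVdef
  have hV0 : 0 ≤ V := integral_nonneg fun q => sq_nonneg _
  -- pair and triple laws
  have hpair : ∀ i j : ℕ, i ≠ j →
      P.map (fun ω => (W i ω, W j ω)) = F₀.prod F₀ := by
    intro i j hij
    have hIF := hiid.indepFun (i := i) (j := j) hij
    rw [indepFun_iff_map_prod_eq_prod_map_map (hWmeas i).aemeasurable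
      (hWmeas j).aemeasurable] at hIF
    rw [hIF, hlaw i, hlaw j]
  have htrip : ∀ i j j' : ℕ, j ≠ i → j' ≠ i → j ≠ j' →
      P.map (fun ω => (W i ω, (W j ω, W j' ω))) = F₀.prod (F₀.prod F₀) := by
    intro i j j' hji hj'i hjj'
    have hIF : IndepFun (W i) (fun ω => (W j ω, W j' ω)) P :=
      (hiid.indepFun_prodMk hWmeas j j' i hji hj'i).symm
    rw [indepFun_iff_map_prod_eq_prod_map_map (hWmeas i).aemeasurable
      ((hWmeas j).prodMk (hWmeas j')).aemeasurable] at hIF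
    rw [hIF, hlaw i, hpair j j' hjj']
  -- the cross-term function
  set G : 𝒲 × (𝒲 × 𝒲) → ℝ := fun p => (inner ℝ (ξ (p.1, p.2.1)) (ξ (p.1, p.2.2)) : ℝ)
    with hGdef
  have hm1 : Measurable (fun p : 𝒲 × (𝒲 × 𝒲) => (p.1, p.2.1)) :=
    measurable_fst.prodMk (measurable_fst.comp measurable_snd)
  have hm2 : Measurable (fun p : 𝒲 × (𝒲 × 𝒲) => (p.1, p.2.2)) :=
    measurable_fst.prodMk (measurable_snd.comp measurable_snd)
  have hGm : Measurable G := (hξm.comp hm1).inner (hξm.comp hm2)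
  have mp1 : MeasurePreserving (fun p : 𝒲 × (𝒲 × 𝒲) => (p.1, p.2.1))
      (F₀.prod (F₀.prod F₀)) (F₀.prod F₀) := (MeasurePreserving.id F₀).prod mpfst
  have mp2 : MeasurePreserving (fun p : 𝒲 × (𝒲 × 𝒲) => (p.1, p.2.2))
      (F₀.prod (F₀.prod F₀)) (F₀.prod F₀) := (MeasurePreserving.id F₀).prod mpsnd
  have hI1 : Integrable (fun p : 𝒲 × (𝒲 × 𝒲) => ‖ξ (p.1, p.2.1)‖ ^ 2)
      (F₀.prod (F₀.prod F₀)) :=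
    (mp1.integrable_comp (hξm.norm.pow_const 2).aestronglyMeasurable).mpr hξsq
  have hI2 : Integrable (fun p : 𝒲 × (𝒲 × 𝒲) => ‖ξ (p.1, p.2.2)‖ ^ 2)
      (F₀.prod (F₀.prod F₀)) :=
    (mp2.integrable_comp (hξm.norm.pow_const 2).aestronglyMeasurable).mpr hξsq
  have hbnd2 : Integrable (fun p : 𝒲 × (𝒲 × 𝒲) =>
      2⁻¹ * ‖ξ (p.1, p.2.1)‖ ^ 2 + 2⁻¹ * ‖ξ (p.1, p.2.2)‖ ^ 2) (F₀.prod (F₀.prod F₀)) :=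
    (hI1.const_mul _).add (hI2.const_mul _)
  have hGint : Integrable G (F₀.prod (F₀.prod F₀)) := by
    refine Integrable.mono' hbnd2 hGm.aestronglyMeasurable (Eventually.of_forall fun p => ?_)
    have h1 : |G p| ≤ ‖ξ (p.1, p.2.1)‖ * ‖ξ (p.1, p.2.2)‖ := abs_real_inner_le_norm _ _
    have h2 : ‖G p‖ = |G p| := Real.norm_eq_abs _
    rw [h2]
    nlinarith [sq_nonneg (‖ξ (p.1, p.2.1)‖ - ‖ξ (p.1, p.2.2)‖)]
  have hsec : ∀ᵐ w ∂F₀, Integrable (fun w' => ψ w w') F₀ := by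
    have := hψInt.prod_right_ae
    exact this
  have hGzero : ∫ p, G p ∂(F₀.prod (F₀.prod F₀)) = 0 := by
    rw [integral_prod _ hGint]
    have hGsec : ∀ᵐ w ∂F₀, Integrable (fun q : 𝒲 × 𝒲 => G (w, q)) (F₀.prod F₀) :=
      hGint.prod_right_ae
    have hz : ∀ᵐ w ∂F₀, (∫ q : 𝒲 × 𝒲, G (w, q) ∂(F₀.prod F₀)) = 0 := by
      filter_upwards [hsec, hGsec] with w hw1 hw2
      have hξw : Integrable (fun v => ξ (w, v)) F₀ := by
        have e : (fun v => ξ (w, v)) = fun v => ψ w v - h w := rfl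
        rw [e]
        exact hw1.sub (integrable_const _)
      have hint0 : ∫ v, ξ (w, v) ∂F₀ = 0 := by
        have e : (fun v => ξ (w, v)) = fun v => ψ w v - h w := rfl
        rw [e, integral_sub hw1 (integrable_const _), integral_const]
        simp [hhdef]
      rw [integral_prod _ hw2]
      have hzz : ∀ u, (∫ v, G (w, (u, v)) ∂F₀) = 0 := by
        intro u
        have e : (fun v => G (w, (u, v))) = fun v => (inner ℝ (ξ (w, u)) (ξ (w, v)) : ℝ) := rfl
        rw [e, integral_inner hξw, hint0, inner_zero_right]
      simp only [hzz, integral_zero]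
    rw [integral_congr_ae hz, integral_zero]
  -- expectations on Ω
  have hcross : ∀ i j j' : ℕ, j ≠ i → j' ≠ i → j ≠ j' →
      ∫ ω, (inner ℝ (ξ (W i ω, W j ω)) (ξ (W i ω, W j' ω)) : ℝ) ∂P = 0 := by
    intro i j j' hji hj'i hjj'
    have htm : Measurable (fun ω => (W i ω, (W j ω, W j' ω))) :=
      (hWmeas i).prodMk ((hWmeas j).prodMk (hWmeas j'))
    have e : ∫ ω, (inner ℝ (ξ (W i ω, W j ω)) (ξ (W i ω, W j' ω)) : ℝ) ∂P
        = ∫ p, G p ∂(P.map (fun ω => (W i ω, (W j ω, W j' ω)))) := by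
      rw [integral_map htm.aemeasurable hGm.aestronglyMeasurable]
    rw [e, htrip i j j' hji hj'i hjj', hGzero]
  have hdiag : ∀ i j : ℕ, i ≠ j →
      ∫ ω, ‖ξ (W i ω, W j ω)‖ ^ 2 ∂P = V := by
    intro i j hij
    have htm : Measurable (fun ω => (W i ω, W j ω)) := (hWmeas i).prodMk (hWmeas j)
    have e : ∫ ω, ‖ξ (W i ω, W j ω)‖ ^ 2 ∂P
        = ∫ q, ‖ξ q‖ ^ 2 ∂(P.map (fun ω => (W i ω, W j ω))) := by
      rw [integral_map htm.aemeasurable (hξm.norm.pow_const 2).aestronglyMeasurable]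
    rw [e, hpair i j hij]
  have hIdiag : ∀ i j : ℕ, i ≠ j →
      Integrable (fun ω => ‖ξ (W i ω, W j ω)‖ ^ 2) P := by
    intro i j hij
    have htm : Measurable (fun ω => (W i ω, W j ω)) := (hWmeas i).prodMk (hWmeas j)
    have := (integrable_map_measure (μ := P) (f := fun ω => (W i ω, W j ω))
      (hξm.norm.pow_const 2).aestronglyMeasurable htm.aemeasurable).mp
    rw [hpair i j hij] at this
    exact this hξsq
  have hIinner : ∀ i j j' : ℕ, j ≠ i → j' ≠ i →
      Integrable (fun ω => (inner ℝ (ξ (W i ω, W j ω)) (ξ (W i ω, W j' ω)) : ℝ)) P := by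
    intro i j j' hji hj'i
    by_cases hjj' : j = j'
    · subst hjj'
      have := hIdiag i j (fun hh => hji hh.symm)
      refine this.mono' ?_ (Eventually.of_forall fun ω => ?_)
      · exact ((hξm.comp ((hWmeas i).prodMk (hWmeas j))).inner
          (hξm.comp ((hWmeas i).prodMk (hWmeas j)))).aestronglyMeasurable
      · rw [Real.norm_eq_abs]
        have := abs_real_inner_le_norm (ξ (W i ω, W j ω)) (ξ (W i ω, W j ω))
        nlinarith [this]
    · have htm : Measurable (fun ω => (W i ω, (W j ω, W j' ω))) :=
        (hWmeas i).prodMk ((hWmeas j).prodMk (hWmeas j'))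
      have := (integrable_map_measure (μ := P) (f := fun ω => (W i ω, (W j ω, W j' ω)))
        hGm.aestronglyMeasurable htm.aemeasurable).mp
      rw [htrip i j j' hji hj'i hjj'] at this
      exact this hGint
  -- expansion of the squared norm of sums
  have hexpand : ∀ (i : ℕ) (s : Finset ℕ) (ω : Ω),
      ‖∑ j ∈ s, ξ (W i ω, W j ω)‖ ^ 2
        = ∑ j ∈ s, ∑ j' ∈ s, (inner ℝ (ξ (W i ω, W j ω)) (ξ (W i ω, W j' ω)) : ℝ) := by
    intro i s ω
    rw [← real_inner_self_eq_norm_sq, sum_inner]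
    exact Finset.sum_congr rfl fun j _ => inner_sum _ _ _
  have hTint : ∀ (n i : ℕ),
      Integrable (fun ω => ‖∑ j ∈ (Finset.range n).erase i, ξ (W i ω, W j ω)‖ ^ 2) P := by
    intro n i
    have e : (fun ω => ‖∑ j ∈ (Finset.range n).erase i, ξ (W i ω, W j ω)‖ ^ 2)
        = fun ω => ∑ j ∈ (Finset.range n).erase i, ∑ j' ∈ (Finset.range n).erase i,
            (inner ℝ (ξ (W i ω, W j ω)) (ξ (W i ω, W j' ω)) : ℝ) :=
      funext (hexpand i _)
    rw [e]
    refine integrable_finset_sum _ fun j hj => integrable_finset_sum _ fun j' hj' => ?_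
    exact hIinner i j j' (Finset.mem_erase.mp hj).1 (Finset.mem_erase.mp hj').1
  have hTval : ∀ (n i : ℕ), i ∈ Finset.range n →
      ∫ ω, ‖∑ j ∈ (Finset.range n).erase i, ξ (W i ω, W j ω)‖ ^ 2 ∂P
        = ((((Finset.range n).erase i).card : ℝ)) * V := by
    intro n i hi
    set s := (Finset.range n).erase i with hsdef
    have e : (fun ω => ‖∑ j ∈ s, ξ (W i ω, W j ω)‖ ^ 2)
        = fun ω => ∑ j ∈ s, ∑ j' ∈ s,
            (inner ℝ (ξ (W i ω, W j ω)) (ξ (W i ω, W j' ω)) : ℝ) := funext (hexpand i _)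
    rw [e, integral_finset_sum _ (fun j hj => integrable_finset_sum _
      (fun j' hj' => hIinner i j j' (Finset.mem_erase.mp hj).1 (Finset.mem_erase.mp hj').1))]
    have perj : ∀ j ∈ s, (∫ ω, ∑ j' ∈ s,
        (inner ℝ (ξ (W i ω, W j ω)) (ξ (W i ω, W j' ω)) : ℝ) ∂P) = V := by
      intro j hj
      have hji : j ≠ i := (Finset.mem_erase.mp hj).1
      rw [integral_finset_sum _ (fun j' hj' =>
        hIinner i j j' hji (Finset.mem_erase.mp hj').1)]
      rw [Finset.sum_eq_single_of_mem j hj (fun j' hj' hne =>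
        hcross i j j' hji (Finset.mem_erase.mp hj').1 (Ne.symm hne))]
      have ediag : (fun ω => (inner ℝ (ξ (W i ω, W j ω)) (ξ (W i ω, W j ω)) : ℝ))
          = fun ω => ‖ξ (W i ω, W j ω)‖ ^ 2 :=
        funext fun ω => real_inner_self_eq_norm_sq _
      rw [ediag, hdiag i j (Ne.symm hji)]
    rw [Finset.sum_congr rfl perj, Finset.sum_const, nsmul_eq_mul]
  -- pointwise rewrite of the summands of R
  have hptw : ∀ n : ℕ, 2 ≤ n → ∀ i ∈ Finset.range n, ∀ ω : Ω,
      ‖(((n:ℝ) - 1)⁻¹ • ∑ j ∈ (Finset.range n).erase i, ψ (W i ω) (W j ω))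
          - (∫ w', ψ (W i ω) w' ∂F₀)‖ ^ 2
        = (((n:ℝ) - 1)⁻¹) ^ 2
          * ‖∑ j ∈ (Finset.range n).erase i, ξ (W i ω, W j ω)‖ ^ 2 := by
    intro n hn i hi ω
    have hn2 : (2:ℝ) ≤ (n:ℝ) := by exact_mod_cast hn
    have hm0 : ((n:ℝ) - 1) ≠ 0 := by linarith
    have hcard : ((Finset.range n).erase i).card = n - 1 := by
      rw [Finset.card_erase_of_mem hi, Finset.card_range]
    have hcast : ((n - 1 : ℕ) : ℝ) = (n:ℝ) - 1 := by
      have : 1 ≤ n := by omega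
      push_cast [this]
      ring
    have e1 : ∑ j ∈ (Finset.range n).erase i, ξ (W i ω, W j ω)
        = (∑ j ∈ (Finset.range n).erase i, ψ (W i ω) (W j ω)) - ((n:ℝ) - 1) • h (W i ω) := by
      have e0 : (fun j => ξ (W i ω, W j ω)) = fun j => ψ (W i ω) (W j ω) - h (W i ω) := rfl
      calc ∑ j ∈ (Finset.range n).erase i, ξ (W i ω, W j ω)
          = ∑ j ∈ (Finset.range n).erase i, (ψ (W i ω) (W j ω) - h (W i ω)) := by rw [e0]
        _ = (∑ j ∈ (Finset.range n).erase i, ψ (W i ω) (W j ω))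
            - ((Finset.range n).erase i).card • h (W i ω) := by
            rw [Finset.sum_sub_distrib, Finset.sum_const]
        _ = (∑ j ∈ (Finset.range n).erase i, ψ (W i ω) (W j ω))
            - ((n:ℝ) - 1) • h (W i ω) := by
            rw [hcard, ← hcast, Nat.cast_smul_eq_nsmul]
    have e2 : (((n:ℝ) - 1)⁻¹ • ∑ j ∈ (Finset.range n).erase i, ψ (W i ω) (W j ω))
        - (∫ w', ψ (W i ω) w' ∂F₀)
        = ((n:ℝ) - 1)⁻¹ • (∑ j ∈ (Finset.range n).erase i, ξ (W i ω, W j ω)) := by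
      rw [e1, smul_sub, smul_smul, inv_mul_cancel₀ hm0, one_smul]
    rw [e2, norm_smul, mul_pow, Real.norm_eq_abs,
      abs_of_nonneg (inv_nonneg.mpr (by linarith : (0:ℝ) ≤ (n:ℝ) - 1))]
  -- integrability and expectation of R n
  have hRint : ∀ n : ℕ, 2 ≤ n → Integrable (fun ω => (n:ℝ)⁻¹ * ∑ i ∈ Finset.range n,
      ‖(((n:ℝ) - 1)⁻¹ • ∑ j ∈ (Finset.range n).erase i, ψ (W i ω) (W j ω))
        - (∫ w', ψ (W i ω) w' ∂F₀)‖ ^ 2) P := by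
    intro n hn
    have e : (fun ω => (n:ℝ)⁻¹ * ∑ i ∈ Finset.range n,
        ‖(((n:ℝ) - 1)⁻¹ • ∑ j ∈ (Finset.range n).erase i, ψ (W i ω) (W j ω))
          - (∫ w', ψ (W i ω) w' ∂F₀)‖ ^ 2)
        = fun ω => (n:ℝ)⁻¹ * ∑ i ∈ Finset.range n, (((n:ℝ) - 1)⁻¹) ^ 2
            * ‖∑ j ∈ (Finset.range n).erase i, ξ (W i ω, W j ω)‖ ^ 2 := by
      funext ω
      congr 1
      exact Finset.sum_congr rfl fun i hi => hptw n hn i hi ω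
    rw [e]
    exact (integrable_finset_sum _ fun i hi => (hTint n i).const_mul _).const_mul _
  have hRval : ∀ n : ℕ, 2 ≤ n → (∫ ω, ((n:ℝ)⁻¹ * ∑ i ∈ Finset.range n,
      ‖(((n:ℝ) - 1)⁻¹ • ∑ j ∈ (Finset.range n).erase i, ψ (W i ω) (W j ω))
        - (∫ w', ψ (W i ω) w' ∂F₀)‖ ^ 2) ∂P) = V / ((n:ℝ) - 1) := by
    intro n hn
    have hn2 : (2:ℝ) ≤ (n:ℝ) := by exact_mod_cast hn
    have hm0 : ((n:ℝ) - 1) ≠ 0 := by linarith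
    have hn0 : (n:ℝ) ≠ 0 := by linarith
    have e : (fun ω => (n:ℝ)⁻¹ * ∑ i ∈ Finset.range n,
        ‖(((n:ℝ) - 1)⁻¹ • ∑ j ∈ (Finset.range n).erase i, ψ (W i ω) (W j ω))
          - (∫ w', ψ (W i ω) w' ∂F₀)‖ ^ 2)
        = fun ω => (n:ℝ)⁻¹ * ∑ i ∈ Finset.range n, (((n:ℝ) - 1)⁻¹) ^ 2
            * ‖∑ j ∈ (Finset.range n).erase i, ξ (W i ω, W j ω)‖ ^ 2 := by
      funext ω
      congr 1
      exact Finset.sum_congr rfl fun i hi => hptw n hn i hi ω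
    rw [e, MeasureTheory.integral_const_mul,
      integral_finset_sum _ (fun i _ => (hTint n i).const_mul _)]
    have percard : ∀ i ∈ Finset.range n,
        (∫ ω, (((n:ℝ) - 1)⁻¹) ^ 2
          * ‖∑ j ∈ (Finset.range n).erase i, ξ (W i ω, W j ω)‖ ^ 2 ∂P)
        = (((n:ℝ) - 1)⁻¹) ^ 2 * (((n:ℝ) - 1) * V) := by
      intro i hi
      rw [MeasureTheory.integral_const_mul, hTval n i hi]
      have hcard : ((Finset.range n).erase i).card = n - 1 := by
        rw [Finset.card_erase_of_mem hi, Finset.card_range]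
      have hcast : ((n - 1 : ℕ) : ℝ) = (n:ℝ) - 1 := by
        have : 1 ≤ n := by omega
        push_cast [this]
        ring
      rw [hcard, hcast]
    rw [Finset.sum_congr rfl percard, Finset.sum_const, Finset.card_range, nsmul_eq_mul]
    field_simp
  -- nonnegativity of R n
  have hRnn : ∀ (n : ℕ) (ω : Ω), 0 ≤ (n:ℝ)⁻¹ * ∑ i ∈ Finset.range n,
      ‖(((n:ℝ) - 1)⁻¹ • ∑ j ∈ (Finset.range n).erase i, ψ (W i ω) (W j ω))
        - (∫ w', ψ (W i ω) w' ∂F₀)‖ ^ 2 := by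
    intro n ω
    have : (0:ℝ) ≤ ∑ i ∈ Finset.range n, ‖(((n:ℝ) - 1)⁻¹ •
        ∑ j ∈ (Finset.range n).erase i, ψ (W i ω) (W j ω))
        - (∫ w', ψ (W i ω) w' ∂F₀)‖ ^ 2 :=
      Finset.sum_nonneg fun i _ => sq_nonneg _
    positivity
  -- Markov and the limit
  intro ε hε
  have hub : ∀ᶠ n : ℕ in atTop, P {ω | ε ≤
      |(n:ℝ)⁻¹ * ∑ i ∈ Finset.range n,
        ‖(((n:ℝ) - 1)⁻¹ • ∑ j ∈ (Finset.range n).erase i, ψ (W i ω) (W j ω))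
          - (∫ w', ψ (W i ω) w' ∂F₀)‖ ^ 2|}
      ≤ ENNReal.ofReal ((V / ε) * ((n:ℝ) - 1)⁻¹) := by
    filter_upwards [eventually_ge_atTop 2] with n hn
    have hn2 : (2:ℝ) ≤ (n:ℝ) := by exact_mod_cast hn
    have hm0 : (0:ℝ) < (n:ℝ) - 1 := by linarith
    have hsetEq : {ω | ε ≤ |(n:ℝ)⁻¹ * ∑ i ∈ Finset.range n,
        ‖(((n:ℝ) - 1)⁻¹ • ∑ j ∈ (Finset.range n).erase i, ψ (W i ω) (W j ω))
          - (∫ w', ψ (W i ω) w' ∂F₀)‖ ^ 2|}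
        = {ω | ε ≤ (n:ℝ)⁻¹ * ∑ i ∈ Finset.range n,
        ‖(((n:ℝ) - 1)⁻¹ • ∑ j ∈ (Finset.range n).erase i, ψ (W i ω) (W j ω))
          - (∫ w', ψ (W i ω) w' ∂F₀)‖ ^ 2} := by
      ext ω
      simp only [Set.mem_setOf_eq, abs_of_nonneg (hRnn n ω)]
    rw [hsetEq]
    have hmark := mul_meas_ge_le_integral_of_nonneg
      (Eventually.of_forall (hRnn n)) (hRint n hn) ε
    rw [hRval n hn] at hmark
    have hfin : P {ω | ε ≤ (n:ℝ)⁻¹ * ∑ i ∈ Finset.range n,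
        ‖(((n:ℝ) - 1)⁻¹ • ∑ j ∈ (Finset.range n).erase i, ψ (W i ω) (W j ω))
          - (∫ w', ψ (W i ω) w' ∂F₀)‖ ^ 2} ≠ ⊤ := measure_ne_top _ _
    have htoReal : (P {ω | ε ≤ (n:ℝ)⁻¹ * ∑ i ∈ Finset.range n,
        ‖(((n:ℝ) - 1)⁻¹ • ∑ j ∈ (Finset.range n).erase i, ψ (W i ω) (W j ω))
          - (∫ w', ψ (W i ω) w' ∂F₀)‖ ^ 2}).toReal ≤ (V / ε) * ((n:ℝ) - 1)⁻¹ := by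
      rw [div_mul_eq_mul_div, mul_comm]
      rw [le_div_iff₀ hε] at *
      calc _ ≤ V / ((n:ℝ) - 1) := by simp only [measureReal_def] at hmark; linarith [hmark]
        _ = ((n:ℝ) - 1)⁻¹ * V := by rw [div_eq_inv_mul]
      
    calc P _ = ENNReal.ofReal ((P _).toReal) := (ENNReal.ofReal_toReal hfin).symm
      _ ≤ ENNReal.ofReal ((V / ε) * ((n:ℝ) - 1)⁻¹) := ENNReal.ofReal_le_ofReal htoReal
  have hlim : Tendsto (fun n : ℕ => ENNReal.ofReal ((V / ε) * ((n:ℝ) - 1)⁻¹))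
      atTop (𝓝 0) := by
    have h1 : Tendsto (fun n : ℕ => ((n:ℝ) - 1)) atTop atTop :=
      tendsto_atTop_add_const_right _ _ tendsto_natCast_atTop_atTop
    have h2 : Tendsto (fun n : ℕ => ((n:ℝ) - 1)⁻¹) atTop (𝓝 0) := h1.inv_tendsto_atTop
    have h3 : Tendsto (fun n : ℕ => (V / ε) * ((n:ℝ) - 1)⁻¹) atTop (𝓝 0) := by
      have := h2.const_mul (V / ε)
      simpa using this
    have := (ENNReal.continuous_ofReal.tendsto 0).comp h3
    simpa [Function.comp_def] using this
  exact tendsto_of_tendsto_of_tendsto_of_le_of_le' tendsto_const_nhds hlim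
    (Eventually.of_forall fun n => zero_le) hub

lemma h_sq_integrable {𝒲 : Type*} [MeasurableSpace 𝒲] (F₀ : Measure 𝒲)
    [IsProbabilityMeasure F₀] {k : ℕ}
    (ψ : 𝒲 → 𝒲 → EuclideanSpace ℝ (Fin k)) (hψm : Measurable (Function.uncurry ψ))
    (hψInt : Integrable (fun q : 𝒲 × 𝒲 => ψ q.1 q.2) (F₀.prod F₀))
    (hψsq : Integrable (fun q : 𝒲 × 𝒲 => ‖ψ q.1 q.2‖ ^ 2) (F₀.prod F₀)) :
    Integrable (fun w => ‖∫ w', ψ w w' ∂F₀‖ ^ 2) F₀ := by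
  have hIm : Integrable (fun w => ∫ w', ‖ψ w w'‖ ^ 2 ∂F₀) F₀ := hψsq.integral_prod_left
  have hhsm : StronglyMeasurable (fun w => ∫ w', ψ w w' ∂F₀) :=
    hψm.stronglyMeasurable.integral_prod_right'
  refine Integrable.mono' hIm
    ((hhsm.measurable.norm.pow_const 2).aestronglyMeasurable) ?_
  filter_upwards [hψInt.prod_right_ae, hψsq.prod_right_ae] with w h1 h2
  have e1 : ‖∫ w', ψ w w' ∂F₀‖ ≤ ∫ w', ‖ψ w w'‖ ∂F₀ := norm_integral_le_integral_norm _
  have e2 : (∫ w', ‖ψ w w'‖ ∂F₀) ^ 2 ≤ ∫ w', ‖ψ w w'‖ ^ 2 ∂F₀ :=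
    sq_integral_le F₀ _ h1.norm h2
  rw [Real.norm_eq_abs, abs_of_nonneg (sq_nonneg _)]
  nlinarith [integral_nonneg (μ := F₀) (f := fun w' => ‖ψ w w'‖) (fun w' => norm_nonneg (ψ w w')),
    norm_nonneg (∫ w', ψ w w' ∂F₀)]

set_option maxHeartbeats 2000000 in

theorem ustat_variance_estimator_consistency
    {Ω 𝒲 : Type*} [MeasurableSpace Ω] [MeasurableSpace 𝒲] {k : ℕ}
    (P : Measure Ω) [IsProbabilityMeasure P]
    (F₀ : Measure 𝒲) [IsProbabilityMeasure F₀]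
    (W : ℕ → Ω → 𝒲)
    (hWmeas : ∀ i, Measurable (W i))
    (hiid : iIndepFun W P)
    (hlaw : ∀ i, P.map (W i) = F₀)
    (g φ : 𝒲 → 𝒲 → EuclideanSpace ℝ (Fin k))
    (hgmeas : Measurable (Function.uncurry g))
    (hφmeas : Measurable (Function.uncurry φ))
    (hgsym : ∀ w w', g w w' = g w' w)
    (hφsym : ∀ w w', φ w w' = φ w' w)
    (hmean : (∫ q : 𝒲 × 𝒲, (g q.1 q.2 + φ q.1 q.2) ∂(F₀.prod F₀)) = 0)
    (hL2 : MemLp (fun q : 𝒲 × 𝒲 => g q.1 q.2 + φ q.1 q.2) 2 (F₀.prod F₀))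
    (ghat φhat : ℕ → ℕ → ℕ → Ω → EuclideanSpace ℝ (Fin k))
    (hgLOO : TendstoInMeasure P
      (fun (n : ℕ) ω => (n:ℝ)⁻¹ * ∑ i ∈ Finset.range n,
        ‖(((n:ℝ) - 1)⁻¹ • ∑ j ∈ (Finset.range n).erase i, ghat n i j ω)
          - (((n:ℝ) - 1)⁻¹ • ∑ j ∈ (Finset.range n).erase i, g (W i ω) (W j ω))‖ ^ 2)
      atTop (fun _ => (0:ℝ)))
    (hφLOO : TendstoInMeasure P
      (fun (n : ℕ) ω => (n:ℝ)⁻¹ * ∑ i ∈ Finset.range n,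
        ‖(((n:ℝ) - 1)⁻¹ • ∑ j ∈ (Finset.range n).erase i, φhat n i j ω)
          - (((n:ℝ) - 1)⁻¹ • ∑ j ∈ (Finset.range n).erase i, φ (W i ω) (W j ω))‖ ^ 2)
      atTop (fun _ => (0:ℝ))) :
    ∀ a b : Fin k,
      TendstoInMeasure P
        (fun (n : ℕ) ω =>
          (4 / ((n:ℝ) * ((n:ℝ) - 1) ^ 2)) *
            ∑ i ∈ Finset.range n,
              ((∑ j ∈ (Finset.range n).erase i, (ghat n i j ω + φhat n i j ω)) a)
              * ((∑ j ∈ (Finset.range n).erase i, (ghat n i j ω + φhat n i j ω)) b))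
        atTop
        (fun _ =>
          4 * ∫ w,
            (((∫ w', (g w w' + φ w w') ∂F₀)
                - ∫ v, (∫ w', (g v w' + φ v w') ∂F₀) ∂F₀) a)
            * (((∫ w', (g w w' + φ w w') ∂F₀)
                - ∫ v, (∫ w', (g v w' + φ v w') ∂F₀) ∂F₀) b) ∂F₀) := by
  intro a b
  have hψm : Measurable (fun q : 𝒲 × 𝒲 => g q.1 q.2 + φ q.1 q.2) := hgmeas.add hφmeas
  have hψInt : Integrable (fun q : 𝒲 × 𝒲 => g q.1 q.2 + φ q.1 q.2) (F₀.prod F₀) :=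
    hL2.integrable one_le_two
  have hψsq : Integrable (fun q : 𝒲 × 𝒲 => ‖g q.1 q.2 + φ q.1 q.2‖ ^ 2) (F₀.prod F₀) := by
    have h := hL2.integrable_norm_rpow two_ne_zero ENNReal.ofNat_ne_top
    have e : (fun q : 𝒲 × 𝒲 => ‖g q.1 q.2 + φ q.1 q.2‖ ^ ((2:ENNReal)).toReal)
        = fun q : 𝒲 × 𝒲 => ‖g q.1 q.2 + φ q.1 q.2‖ ^ 2 := by
      funext q
      rw [ENNReal.toReal_ofNat, show ((2:ℝ)) = ((2:ℕ):ℝ) by norm_num, Real.rpow_natCast]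
    rwa [e] at h
  have hψm' : Measurable (Function.uncurry (fun w w' => g w w' + φ w w')) := hψm
  have hhsq : Integrable (fun w => ‖∫ w', (g w w' + φ w w') ∂F₀‖ ^ 2) F₀ :=
    h_sq_integrable F₀ (fun w w' => g w w' + φ w w') hψm' hψInt hψsq
  have hhm : Measurable (fun w => ∫ w', (g w w' + φ w w') ∂F₀) :=
    (hψm.stronglyMeasurable.integral_prod_right').measurable
  have hhab : Integrable (fun w => (∫ w', (g w w' + φ w w') ∂F₀) a
      * (∫ w', (g w w' + φ w w') ∂F₀) b) F₀ := by
    refine hhsq.mono' ?_ (Eventually.of_forall fun w => ?_)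
    · exact (((measurable_pi_apply a).comp ((WithLp.measurable_ofLp 2 _).comp hhm)).mul
        ((measurable_pi_apply b).comp ((WithLp.measurable_ofLp 2 _).comp hhm))).aestronglyMeasurable
    · rw [Real.norm_eq_abs, abs_mul]
      have h1 := abs_coord_le_norm (∫ w', (g w w' + φ w w') ∂F₀) a
      have h2 := abs_coord_le_norm (∫ w', (g w w' + φ w w') ∂F₀) b
      nlinarith [abs_nonneg ((∫ w', (g w w' + φ w w') ∂F₀) a),
        abs_nonneg ((∫ w', (g w w' + φ w w') ∂F₀) b),
        norm_nonneg (∫ w', (g w w' + φ w w') ∂F₀)]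
  have hint0 : (∫ v, (∫ w', (g v w' + φ v w') ∂F₀) ∂F₀) = 0 := by
    have h := integral_prod (fun q : 𝒲 × 𝒲 => g q.1 q.2 + φ q.1 q.2) hψInt
    rw [hmean] at h
    exact h.symm
  have hgoal : (fun _ : Ω => 4 * ∫ w,
      (((∫ w', (g w w' + φ w w') ∂F₀) - ∫ v, (∫ w', (g v w' + φ v w') ∂F₀) ∂F₀) a)
      * (((∫ w', (g w w' + φ w w') ∂F₀) - ∫ v, (∫ w', (g v w' + φ v w') ∂F₀) ∂F₀) b) ∂F₀)
      = fun _ : Ω => 4 * ∫ w, ((∫ w', (g w w' + φ w w') ∂F₀) a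
          * (∫ w', (g w w' + φ w w') ∂F₀) b) ∂F₀ := by
    funext _
    rw [hint0]
    simp only [sub_zero]
  rw [hgoal]
  have hHv0 : (0:ℝ) ≤ ∫ w, ‖∫ w', (g w w' + φ w w') ∂F₀‖ ^ 2 ∂F₀ :=
    integral_nonneg fun w => sq_nonneg _
  refine combine P _
    (fun (n : ℕ) ω => (n:ℝ)⁻¹ * ∑ i ∈ Finset.range n,
      ((∫ w', (g (W i ω) w' + φ (W i ω) w') ∂F₀) a
        * (∫ w', (g (W i ω) w' + φ (W i ω) w') ∂F₀) b))
    (fun (n : ℕ) ω => (n:ℝ)⁻¹ * ∑ i ∈ Finset.range n,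
      ‖∫ w', (g (W i ω) w' + φ (W i ω) w') ∂F₀‖ ^ 2)
    (fun (n : ℕ) ω => (n:ℝ)⁻¹ * ∑ i ∈ Finset.range n,
        ‖(((n:ℝ) - 1)⁻¹ • ∑ j ∈ (Finset.range n).erase i, ghat n i j ω)
          - (((n:ℝ) - 1)⁻¹ • ∑ j ∈ (Finset.range n).erase i, g (W i ω) (W j ω))‖ ^ 2)
    (fun (n : ℕ) ω => (n:ℝ)⁻¹ * ∑ i ∈ Finset.range n,
        ‖(((n:ℝ) - 1)⁻¹ • ∑ j ∈ (Finset.range n).erase i, φhat n i j ω)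
          - (((n:ℝ) - 1)⁻¹ • ∑ j ∈ (Finset.range n).erase i, φ (W i ω) (W j ω))‖ ^ 2)
    (fun (n : ℕ) ω => (n:ℝ)⁻¹ * ∑ i ∈ Finset.range n,
      ‖(((n:ℝ) - 1)⁻¹ • ∑ j ∈ (Finset.range n).erase i,
          (g (W i ω) (W j ω) + φ (W i ω) (W j ω)))
        - (∫ w', (g (W i ω) w' + φ (W i ω) w') ∂F₀)‖ ^ 2)
    (∫ w, ((∫ w', (g w w' + φ w w') ∂F₀) a * (∫ w', (g w w' + φ w w') ∂F₀) b) ∂F₀)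
    (∫ w, ‖∫ w', (g w w' + φ w w') ∂F₀‖ ^ 2 ∂F₀)
    hHv0 ?_ ?_ ?_ ?_ ?_ ?_
  · intro ε hε
    exact slln_aux P F₀ W hWmeas hiid hlaw
      (fun w => (∫ w', (g w w' + φ w w') ∂F₀) a * (∫ w', (g w w' + φ w w') ∂F₀) b)
      (((measurable_pi_apply a).comp ((WithLp.measurable_ofLp 2 _).comp hhm)).mul ((measurable_pi_apply b).comp ((WithLp.measurable_ofLp 2 _).comp hhm)))
      hhab ε hε
  · intro ε hε
    exact slln_aux P F₀ W hWmeas hiid hlaw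
      (fun w => ‖∫ w', (g w w' + φ w w') ∂F₀‖ ^ 2)
      (hhm.norm.pow_const 2) hhsq ε hε
  · intro ε hε
    simpa only [Real.dist_eq, sub_zero] using tendstoInMeasure_iff_dist.mp hgLOO ε hε
  · intro ε hε
    simpa only [Real.dist_eq, sub_zero] using tendstoInMeasure_iff_dist.mp hφLOO ε hε
  · intro ε hε
    exact Rconv P F₀ W hWmeas hiid hlaw (fun w w' => g w w' + φ w w')
      hψm' hψInt hhsq hψsq ε hε
  · intro θ hθ
    filter_upwards [eventually_ge_atTop 2] with n hn
    intro ω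
    have hpb := pointwise_bound n hn θ hθ a b
      (fun i => ∑ j ∈ (Finset.range n).erase i, ghat n i j ω)
      (fun i => ∑ j ∈ (Finset.range n).erase i, φhat n i j ω)
      (fun i => ∑ j ∈ (Finset.range n).erase i, g (W i ω) (W j ω))
      (fun i => ∑ j ∈ (Finset.range n).erase i, φ (W i ω) (W j ω))
      (fun i => ∫ w', (g (W i ω) w' + φ (W i ω) w') ∂F₀)
    simp only at hpb ⊢
    have eX : ∑ i ∈ Finset.range n,
        ((∑ j ∈ (Finset.range n).erase i, (ghat n i j ω + φhat n i j ω)) a)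
        * ((∑ j ∈ (Finset.range n).erase i, (ghat n i j ω + φhat n i j ω)) b)
        = ∑ i ∈ Finset.range n,
        (((∑ j ∈ (Finset.range n).erase i, ghat n i j ω)
          + (∑ j ∈ (Finset.range n).erase i, φhat n i j ω)) a)
        * (((∑ j ∈ (Finset.range n).erase i, ghat n i j ω)
          + (∑ j ∈ (Finset.range n).erase i, φhat n i j ω)) b) := by
      refine Finset.sum_congr rfl fun i _ => ?_
      rw [Finset.sum_add_distrib]
    have eR : ∑ i ∈ Finset.range n,
        ‖(((n:ℝ) - 1)⁻¹ • ∑ j ∈ (Finset.range n).erase i,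
            (g (W i ω) (W j ω) + φ (W i ω) (W j ω)))
          - (∫ w', (g (W i ω) w' + φ (W i ω) w') ∂F₀)‖ ^ 2
        = ∑ i ∈ Finset.range n,
        ‖(((n:ℝ) - 1)⁻¹ • ((∑ j ∈ (Finset.range n).erase i, g (W i ω) (W j ω))
            + (∑ j ∈ (Finset.range n).erase i, φ (W i ω) (W j ω))))
          - (∫ w', (g (W i ω) w' + φ (W i ω) w') ∂F₀)‖ ^ 2 := by
      refine Finset.sum_congr rfl fun i _ => ?_
      rw [Finset.sum_add_distrib]
    rw [eX, eR]
    have tri := abs_sub_le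
      ((4 / ((n:ℝ) * ((n:ℝ) - 1) ^ 2)) * ∑ i ∈ Finset.range n,
        (((∑ j ∈ (Finset.range n).erase i, ghat n i j ω)
          + (∑ j ∈ (Finset.range n).erase i, φhat n i j ω)) a)
        * (((∑ j ∈ (Finset.range n).erase i, ghat n i j ω)
          + (∑ j ∈ (Finset.range n).erase i, φhat n i j ω)) b))
      (4 * ((n:ℝ)⁻¹ * ∑ i ∈ Finset.range n,
        ((∫ w', (g (W i ω) w' + φ (W i ω) w') ∂F₀) a
          * (∫ w', (g (W i ω) w' + φ (W i ω) w') ∂F₀) b)))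
      (4 * (∫ w, ((∫ w', (g w w' + φ w w') ∂F₀) a
          * (∫ w', (g w w' + φ w w') ∂F₀) b) ∂F₀))
    have e4 : |4 * ((n:ℝ)⁻¹ * ∑ i ∈ Finset.range n,
        ((∫ w', (g (W i ω) w' + φ (W i ω) w') ∂F₀) a
          * (∫ w', (g (W i ω) w' + φ (W i ω) w') ∂F₀) b))
        - 4 * (∫ w, ((∫ w', (g w w' + φ w w') ∂F₀) a
          * (∫ w', (g w w' + φ w w') ∂F₀) b) ∂F₀)|
        = 4 * |((n:ℝ)⁻¹ * ∑ i ∈ Finset.range n,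
        ((∫ w', (g (W i ω) w' + φ (W i ω) w') ∂F₀) a
          * (∫ w', (g (W i ω) w' + φ (W i ω) w') ∂F₀) b))
        - (∫ w, ((∫ w', (g w w' + φ w w') ∂F₀) a
          * (∫ w', (g w w' + φ w w') ∂F₀) b) ∂F₀)| := by
      rw [← mul_sub, abs_mul]
      norm_num
    rw [e4] at tri
    linarith [hpb, tri]
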